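/- Let (V, •, ∘, 1, ∂) be a 2-associative differential algebra: (V, •, 1, ∂) is a differential graded algebra and ∘ is a second associative operation with the same unit 1. Define m_n: V^{⊗n} → V recursively by m_1 = ∂ and m_n = ∂∘^{(n−1)} − Σ_{k=2}^n ∘^{(k−1)} Σ_{i+1+j=k, i,j≥0} id^{⊗i} ⊗ m_{n−i−j} ⊗ id^{⊗j}. Then for all n ≥ 4 and homogeneous v_1,…,v_n: m_n(v_1⊗⋯⊗v_n) = ∂(v_1∘⋯∘v_n) − ∂(v_1∘⋯∘v_{n−1})∘v_n − (−1)^{|v_1|} v_1∘∂(v_2∘⋯∘v_n) + (−1)^{|v_1|} v_1∘∂(v_2∘⋯∘v_{n−1})∘v_n. -/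

import Mathlib

noncomputable section

namespace Paper

variable {K V : Type*} [Field K] [AddCommGroup V] [Module K V]

/-- Iterated product `v₁ ∘ (v₂ ∘ (⋯ ∘ (vₙ ∘ 1)))` of a list of elements of `V`;
for a unital operation this is `∘^{(n-1)}` on nonempty lists. -/
def cprod (circ : V →ₗ[K] V →ₗ[K] V) (one : V) : List V → V
  | [] => one
  | a :: l => circ a (cprod circ one l)

variable (𝒜 : ℤ → Submodule K V)

/-- The underlying list of vectors of a list of homogeneous elements. -/
def toV : List (Σ i : ℤ, 𝒜 i) → List V := fun l => l.map fun p => (p.2 : V)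

/-- Total degree of a list of homogeneous elements. -/
def degsum : List (Σ i : ℤ, 𝒜 i) → ℤ := fun l => (l.map Sigma.fst).sum

end Paper

open Paper
lemma tele' {M : Type*} [AddCommGroup M] (f : ℕ → M) :
    ∀ (b a : ℕ), a ≤ b + 1 → ∑ k ∈ Finset.Icc a b, (f k - f (k+1)) = f a - f (b+1) := by
  intro b
  induction b with
  | zero =>
    intro a ha
    interval_cases a
    · simp
    · simp [Finset.Icc_eq_empty_of_lt]
  | succ b ih =>
    intro a ha
    rcases le_or_gt a (b+1) with h | h
    · rw [Finset.sum_Icc_succ_top h, ih a h]; abel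
    · have hae : a = b + 2 := by omega
      subst hae
      rw [Finset.Icc_eq_empty_of_lt (by omega)]
      simp

-- key combinatorial summation lemma
lemma keysum {M : Type*} [AddCommGroup M] (n : ℕ) (hn : 2 ≤ n)
    (T : ℕ → ℕ → M) (A : ℕ → ℕ → M)
    (hA : ∀ i, A i i = 0)
    (hTn : ∀ i < n, T n i = A i (i+1))
    (hTk : ∀ k, 2 ≤ k → k ≤ n - 1 → ∀ i < k,
      T k i = A i (i + (n-k) + 1) - A i (i + (n-k)) - A (i+1) (i + (n-k) + 1)
              + A (i+1) (i + (n-k))) :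
    ∑ k ∈ Finset.Icc 2 n, ∑ i ∈ Finset.range k, T k i
      = A 0 (n-1) + A 1 n - A 1 (n-1) := by
  -- G r i = A i (i+r) - A (i+1) (i+r), P k = ∑_{i<k} G (n-k+1) i
  set G : ℕ → ℕ → M := fun r i => A i (i+r) - A (i+1) (i+r) with hG
  set P : ℕ → M := fun k => ∑ i ∈ Finset.range k, G (n-k+1) i with hP
  have hsplit : ∑ k ∈ Finset.Icc 2 n, ∑ i ∈ Finset.range k, T k i
      = (∑ k ∈ Finset.Icc 2 (n-1), ∑ i ∈ Finset.range k, T k i)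
        + ∑ i ∈ Finset.range n, T n i := by
    have h' : n = (n-1) + 1 := by omega
    rw [h', Finset.sum_Icc_succ_top (by omega), ← h']
  rw [hsplit]
  have hlast : ∑ i ∈ Finset.range n, T n i = ∑ i ∈ Finset.range n, A i (i+1) :=
    Finset.sum_congr rfl fun i hi => hTn i (Finset.mem_range.mp hi)
  have hinner : ∀ k ∈ Finset.Icc 2 (n-1),
      ∑ i ∈ Finset.range k, T k i = (P k - P (k+1)) + G (n-k) k := by
    intro k hk
    obtain ⟨hk2, hk1⟩ := Finset.mem_Icc.mp hk
    have h1 : ∀ i < k, T k i = G (n-k+1) i - G (n-k) i := by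
      intro i hik
      rw [hTk k hk2 hk1 i hik]
      simp only [hG]
      have e1 : i + (n - k) + 1 = i + (n - k + 1) := by omega
      rw [e1]
      abel
    have h2 : ∑ i ∈ Finset.range k, T k i
        = (∑ i ∈ Finset.range k, G (n-k+1) i) - ∑ i ∈ Finset.range k, G (n-k) i := by
      rw [← Finset.sum_sub_distrib]
      exact Finset.sum_congr rfl fun i hi => h1 i (Finset.mem_range.mp hi)
    rw [h2]
    have h3 : P (k+1) = (∑ i ∈ Finset.range k, G (n-k) i) + G (n-k) k := by
      simp only [hP]
      have e2 : n - (k+1) + 1 = n - k := by omega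
      rw [e2, Finset.sum_range_succ]
    have : P k = ∑ i ∈ Finset.range k, G (n-k+1) i := rfl
    rw [this, h3]
    abel
  have hsum1 : ∑ k ∈ Finset.Icc 2 (n-1), ∑ i ∈ Finset.range k, T k i
      = (∑ k ∈ Finset.Icc 2 (n-1), (P k - P (k+1)))
        + ∑ k ∈ Finset.Icc 2 (n-1), G (n-k) k := by
    rw [← Finset.sum_add_distrib]
    exact Finset.sum_congr rfl hinner
  have htel1 : ∑ k ∈ Finset.Icc 2 (n-1), (P k - P (k+1)) = P 2 - P n := by
    have e : n - 1 + 1 = n := by omega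
    rw [tele' P (n-1) 2 (by omega), e]
  have htel2 : ∑ k ∈ Finset.Icc 2 (n-1), G (n-k) k = A 2 n - A n n := by
    have h4 : ∀ k ∈ Finset.Icc 2 (n-1), G (n-k) k = A k n - A (k+1) n := by
      intro k hk
      obtain ⟨hk2, hk1⟩ := Finset.mem_Icc.mp hk
      simp only [hG]
      have : k + (n - k) = n := by omega
      rw [this]
    rw [Finset.sum_congr rfl h4]
    have e : n - 1 + 1 = n := by omega
    rw [tele' (fun k => A k n) (n-1) 2 (by omega), e]
  have hP2 : P 2 = (A 0 (n-1) - A 1 (n-1)) + (A 1 n - A 2 n) := by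
    simp only [hP, hG]
    rw [Finset.sum_range_succ, Finset.sum_range_one]
    have e3 : n - 2 + 1 = n - 1 := by omega
    have e4 : 0 + (n-1) = n - 1 := by omega
    have e5 : 0 + 1 = 1 := rfl
    have e6 : 1 + (n-1) = n := by omega
    rw [e3, e4, e6]
  have hPn : P n = ∑ i ∈ Finset.range n, A i (i+1) := by
    simp only [hP, hG]
    have e7 : n - n + 1 = 1 := by omega
    rw [e7]
    apply Finset.sum_congr rfl
    intro i _
    rw [hA (i+1)]
    abel
  rw [hlast, hsum1, htel1, htel2, hP2, hPn, hA n]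
  abel



section Helpers

variable {K V : Type*} [Field K] [AddCommGroup V] [Module K V]

@[simp] lemma toV_nil (𝒜 : ℤ → Submodule K V) : toV 𝒜 [] = [] := rfl

@[simp] lemma toV_cons (𝒜 : ℤ → Submodule K V) (a : Σ i : ℤ, 𝒜 i) (t : List (Σ i : ℤ, 𝒜 i)) :
    toV 𝒜 (a :: t) = (a.2 : V) :: toV 𝒜 t := rfl

@[simp] lemma toV_append (𝒜 : ℤ → Submodule K V) (t1 t2 : List (Σ i : ℤ, 𝒜 i)) :
    toV 𝒜 (t1 ++ t2) = toV 𝒜 t1 ++ toV 𝒜 t2 := List.map_append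

@[simp] lemma toV_length (𝒜 : ℤ → Submodule K V) (t : List (Σ i : ℤ, 𝒜 i)) :
    (toV 𝒜 t).length = t.length := List.length_map _

@[simp] lemma degsum_nil (𝒜 : ℤ → Submodule K V) : degsum 𝒜 [] = 0 := rfl

@[simp] lemma degsum_cons (𝒜 : ℤ → Submodule K V) (a : Σ i : ℤ, 𝒜 i) (t : List (Σ i : ℤ, 𝒜 i)) :
    degsum 𝒜 (a :: t) = a.1 + degsum 𝒜 t := by simp [degsum]

@[simp] lemma degsum_append (𝒜 : ℤ → Submodule K V) (t1 t2 : List (Σ i : ℤ, 𝒜 i)) :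
    degsum 𝒜 (t1 ++ t2) = degsum 𝒜 t1 + degsum 𝒜 t2 := by simp [degsum]

lemma cprod_nil (circ : V →ₗ[K] V →ₗ[K] V) (one : V) : cprod circ one [] = one := rfl

lemma cprod_cons (circ : V →ₗ[K] V →ₗ[K] V) (one : V) (a : V) (t : List V) :
    cprod circ one (a :: t) = circ a (cprod circ one t) := rfl

lemma take_append_cons {α : Type*} (l1 : List α) (b : α) (l2 : List α) :
    (l1 ++ b :: l2).take (l1.length + 1) = l1 ++ [b] := by
  induction l1 with
  | nil => simp
  | cons a t ih => simp [ih]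

lemma drop_append_cons {α : Type*} (l1 : List α) (b : α) (l2 : List α) :
    (l1 ++ b :: l2).drop (l1.length + 1) = l2 := by
  induction l1 with
  | nil => simp
  | cons a t ih => simp [ih]

lemma split3 {α : Type*} (l : List α) (i r : ℕ) (h2 : 2 ≤ r) (h : i + r ≤ l.length) :
    ∃ (p : List α) (x : α) (q : List α) (z : α) (s : List α),
      l = p ++ x :: (q ++ z :: s) ∧ p.length = i ∧ q.length = r - 2 := by
  have hp : (l.take i).length = i := by rw [List.length_take]; omega
  have hdlen : (l.drop i).length = l.length - i := List.length_drop
  have hne : l.drop i ≠ [] := by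
    intro hnil
    rw [hnil] at hdlen
    simp at hdlen
    omega
  obtain ⟨x, u, hx⟩ := List.exists_cons_of_ne_nil hne
  have hu : u.length = l.length - i - 1 := by
    have := congrArg List.length hx
    simp at this
    omega
  have hq : (u.take (r-2)).length = r - 2 := by rw [List.length_take]; omega
  have hne2 : u.drop (r-2) ≠ [] := by
    intro hnil
    have := congrArg List.length hnil
    rw [List.length_drop] at this
    simp at this
    omega
  obtain ⟨z, s, hz⟩ := List.exists_cons_of_ne_nil hne2
  refine ⟨l.take i, x, u.take (r-2), z, s, ?_, hp, hq⟩
  conv_lhs => rw [← List.take_append_drop i l, hx]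
  rw [← hz, List.take_append_drop]

end Helpers

-- The two families of terms appearing in the analysis of the recursion.
abbrev Tterm {K V : Type*} [Field K] [AddCommGroup V] [Module K V]
    (𝒜 : ℤ → Submodule K V) (circ : V →ₗ[K] V →ₗ[K] V) (one : V)
    (m : List V → V) (l : List (Σ i : ℤ, 𝒜 i)) (k i : ℕ) : V :=
  ((-1 : K) ^ degsum 𝒜 (l.take i)) •
    cprod circ one
      ((toV 𝒜 l).take i
        ++ m (((toV 𝒜 l).drop i).take (l.length - k + 1))
          :: (toV 𝒜 l).drop (i + (l.length - k + 1)))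

abbrev Aterm {K V : Type*} [Field K] [AddCommGroup V] [Module K V]
    (𝒜 : ℤ → Submodule K V) (circ : V →ₗ[K] V →ₗ[K] V) (one : V)
    (δ : V →ₗ[K] V) (l : List (Σ i : ℤ, 𝒜 i)) (i j : ℕ) : V :=
  ((-1 : K) ^ degsum 𝒜 (l.take i)) •
    cprod circ one
      ((toV 𝒜 l).take i
        ++ δ (cprod circ one (((toV 𝒜 l).drop i).take (j - i)))
          :: (toV 𝒜 l).drop j)


/-- In a 2-associative differential algebra `(V, •, ∘, 1, ∂)`, Börjeson's
higher products `m_n`, defined by `m₁ = ∂` and the recursion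
`m_n = ∂∘^{(n−1)} − Σ_{k=2}^n ∘^{(k−1)} Σ_{i+1+j=k} id^{⊗i} ⊗ m_{n−i−j} ⊗ id^{⊗j}`
(with Koszul signs), are given for `n ≥ 4` on homogeneous elements by
`m_n(v₁⊗⋯⊗vₙ) = ∂(v₁∘⋯∘vₙ) − ∂(v₁∘⋯∘v_{n−1})∘vₙ − (−1)^{|v₁|}v₁∘∂(v₂∘⋯∘vₙ)
 + (−1)^{|v₁|}v₁∘∂(v₂∘⋯∘v_{n−1})∘vₙ`. -/
theorem stmt18 (K V : Type*) [Field K] [AddCommGroup V] [Module K V]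
    (𝒜 : ℤ → Submodule K V) [DirectSum.Decomposition 𝒜]
    (bullet circ : V →ₗ[K] V →ₗ[K] V) (one : V) (δ : V →ₗ[K] V)
    -- a 2-associative differential algebra structure
    (hbassoc : ∀ u v w : V, bullet (bullet u v) w = bullet u (bullet v w))
    (hcassoc : ∀ u v w : V, circ (circ u v) w = circ u (circ v w))
    (hbunit : ∀ v : V, bullet one v = v ∧ bullet v one = v)
    (hcunit : ∀ v : V, circ one v = v ∧ circ v one = v)
    (hone : one ∈ 𝒜 0)
    (hbdeg : ∀ (i j : ℤ) (v w : V), v ∈ 𝒜 i → w ∈ 𝒜 j → bullet v w ∈ 𝒜 (i + j))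
    (hcdeg : ∀ (i j : ℤ) (v w : V), v ∈ 𝒜 i → w ∈ 𝒜 j → circ v w ∈ 𝒜 (i + j))
    (hδdeg : ∀ (i : ℤ), ∀ v ∈ 𝒜 i, δ v ∈ 𝒜 (i - 1))
    (hδ2 : δ ∘ₗ δ = 0)
    (hderiv : ∀ (i : ℤ), ∀ x ∈ 𝒜 i, ∀ y : V,
      δ (bullet x y) = bullet (δ x) y + ((-1 : K) ^ i) • bullet x (δ y))
    -- the family (m_n) and its recursive definition on homogeneous elements
    (m : List V → V)
    (hm1 : ∀ v : V, m [v] = δ v)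
    (hmrec : ∀ l : List (Σ i : ℤ, 𝒜 i), 2 ≤ l.length →
      m (toV 𝒜 l)
        = δ (cprod circ one (toV 𝒜 l))
          - ∑ k ∈ Finset.Icc 2 l.length, ∑ i ∈ Finset.range k,
              ((-1 : K) ^ degsum 𝒜 (l.take i)) •
                cprod circ one
                  ((toV 𝒜 l).take i
                    ++ m (((toV 𝒜 l).drop i).take (l.length - k + 1))
                      :: (toV 𝒜 l).drop (i + (l.length - k + 1)))) :
    -- the closed formula for n ≥ 4
    ∀ (x z : Σ i : ℤ, 𝒜 i) (mid : List (Σ i : ℤ, 𝒜 i)), 2 ≤ mid.length →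
      ∀ l : List (Σ i : ℤ, 𝒜 i), l = x :: (mid ++ [z]) →
        m (toV 𝒜 l)
          = δ (cprod circ one (toV 𝒜 l))
            - circ (δ (cprod circ one (toV 𝒜 (x :: mid)))) (z.2 : V)
            - ((-1 : K) ^ x.1) •
                circ (x.2 : V) (δ (cprod circ one (toV 𝒜 (mid ++ [z]))))
            + ((-1 : K) ^ x.1) •
                circ (x.2 : V) (circ (δ (cprod circ one (toV 𝒜 mid))) (z.2 : V)) := by
  have hcu1 : ∀ v : V, circ one v = v := fun v => (hcunit v).1
  have hcu2 : ∀ v : V, circ v one = v := fun v => (hcunit v).2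
  have capp : ∀ l1 l2 : List V,
      cprod circ one (l1 ++ l2) = circ (cprod circ one l1) (cprod circ one l2) := by
    intro l1
    induction l1 with
    | nil => intro l2; simp [cprod_nil, hcu1]
    | cons a t ih => intro l2; rw [List.cons_append, cprod_cons, ih, cprod_cons, hcassoc]
  have hsplice : ∀ (l1 l2 : List V) (a : V),
      cprod circ one (l1 ++ a :: l2)
        = circ (cprod circ one l1) (circ a (cprod circ one l2)) := by
    intro l1 l2 a; rw [capp, cprod_cons]
  have hδone : δ one = 0 := by
    have h := hderiv 0 one hone one
    rw [(hbunit one).1, (hbunit (δ one)).2] at h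
    simp only [zpow_zero, one_smul, (hbunit (δ one)).1] at h
    exact (left_eq_add.mp h)
  have hK0 : (-1 : K) ≠ 0 := by norm_num
  have aux : ∀ (N : ℕ) (x z : Σ i : ℤ, 𝒜 i) (mid : List (Σ i : ℤ, 𝒜 i)), mid.length = N →
      m (toV 𝒜 (x :: (mid ++ [z])))
        = δ (cprod circ one (toV 𝒜 (x :: (mid ++ [z]))))
          - circ (δ (cprod circ one (toV 𝒜 (x :: mid)))) (z.2 : V)
          - ((-1 : K) ^ x.1) • circ (x.2 : V) (δ (cprod circ one (toV 𝒜 (mid ++ [z]))))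
          + ((-1 : K) ^ x.1) •
              circ (x.2 : V) (circ (δ (cprod circ one (toV 𝒜 mid))) (z.2 : V)) := by
    intro N
    induction N using Nat.strong_induction_on with
    | _ N IH =>
    intro x z mid hmidlen
    set l : List (Σ i : ℤ, 𝒜 i) := x :: (mid ++ [z]) with hl
    have hlen : l.length = mid.length + 2 := by simp [hl]
    have hl2 : 2 ≤ l.length := by omega
    have hA0 : ∀ i, Aterm 𝒜 circ one δ l i i = 0 := by
      intro i
      simp only [Aterm, Nat.sub_self, List.take_zero]
      rw [cprod_nil, hδone, hsplice]
      simp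
    have hTn : ∀ i < l.length, Tterm 𝒜 circ one m l l.length i
        = Aterm 𝒜 circ one δ l i (i+1) := by
      intro i hi
      simp only [Tterm, Aterm]
      rw [show l.length - l.length + 1 = 1 from by omega, show i + 1 - i = 1 from by omega]
      have hne : (toV 𝒜 l).drop i ≠ [] := by
        intro h
        have := congrArg List.length h
        rw [List.length_drop] at this
        simp at this
        omega
      obtain ⟨a, t, hat⟩ := List.exists_cons_of_ne_nil hne
      rw [hat, show (a :: t).take 1 = [a] from rfl, hm1, cprod_cons, cprod_nil, hcu2]
    have hTk : ∀ k, 2 ≤ k → k ≤ l.length - 1 → ∀ i < k,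
        Tterm 𝒜 circ one m l k i
          = Aterm 𝒜 circ one δ l i (i + (l.length - k) + 1)
            - Aterm 𝒜 circ one δ l i (i + (l.length - k))
            - Aterm 𝒜 circ one δ l (i+1) (i + (l.length - k) + 1)
            + Aterm 𝒜 circ one δ l (i+1) (i + (l.length - k)) := by
      intro k hk2 hk1 i hik
      obtain ⟨r, hr⟩ : ∃ r, l.length - k + 1 = r := ⟨_, rfl⟩
      have hrk : l.length - k = r - 1 := by omega
      have hr2 : 2 ≤ r := by omega
      have hir : i + r ≤ l.length := by omega
      have hN1 : r - 2 < N := by omega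
      obtain ⟨p, x', q, z', s, hlsplit, hplen, hqlen⟩ := split3 l i r hr2 hir
      have hvp : (toV 𝒜 p).length = i := by simp [hplen]
      have hvq : (toV 𝒜 q).length = r - 2 := by simp [hqlen]
      have hvlA : toV 𝒜 l = toV 𝒜 p ++ (x'.2 : V) :: (toV 𝒜 q ++ (z'.2 : V) :: toV 𝒜 s) := by
        rw [hlsplit]; simp
      have f1 : (toV 𝒜 l).take i = toV 𝒜 p := by
        rw [hvlA]; exact List.take_left' hvp
      have f2 : (toV 𝒜 l).drop i = (x'.2 : V) :: (toV 𝒜 q ++ (z'.2 : V) :: toV 𝒜 s) := by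
        rw [hvlA]; exact List.drop_left' hvp
      have f3 : ((toV 𝒜 l).drop i).take r = (x'.2 : V) :: (toV 𝒜 q ++ [(z'.2 : V)]) := by
        rw [f2,
          show ((x'.2 : V) :: (toV 𝒜 q ++ (z'.2 : V) :: toV 𝒜 s))
              = ((x'.2 : V) :: toV 𝒜 q) ++ (z'.2 : V) :: toV 𝒜 s from by simp,
          show r = ((x'.2 : V) :: toV 𝒜 q).length + 1 from by simp [hvq]; omega,
          take_append_cons]
        simp
      have f4 : (toV 𝒜 l).drop (i + r) = toV 𝒜 s := by
        rw [hvlA,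
          show (toV 𝒜 p ++ (x'.2 : V) :: (toV 𝒜 q ++ (z'.2 : V) :: toV 𝒜 s))
              = (toV 𝒜 p ++ (x'.2 : V) :: toV 𝒜 q) ++ (z'.2 : V) :: toV 𝒜 s from by simp,
          show i + r = (toV 𝒜 p ++ (x'.2 : V) :: toV 𝒜 q).length + 1 from by
            simp [hvp, hvq]; omega,
          drop_append_cons]
      have f5 : ((toV 𝒜 l).drop i).take (r-1) = (x'.2 : V) :: toV 𝒜 q := by
        rw [f2,
          show ((x'.2 : V) :: (toV 𝒜 q ++ (z'.2 : V) :: toV 𝒜 s))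
              = ((x'.2 : V) :: toV 𝒜 q) ++ (z'.2 : V) :: toV 𝒜 s from by simp]
        exact List.take_left' (by simp [hvq]; omega)
      have f6 : (toV 𝒜 l).drop (i + (r-1)) = (z'.2 : V) :: toV 𝒜 s := by
        rw [hvlA,
          show (toV 𝒜 p ++ (x'.2 : V) :: (toV 𝒜 q ++ (z'.2 : V) :: toV 𝒜 s))
              = (toV 𝒜 p ++ (x'.2 : V) :: toV 𝒜 q) ++ (z'.2 : V) :: toV 𝒜 s from by simp]
        exact List.drop_left' (by simp [hvp, hvq]; omega)
      have f7 : (toV 𝒜 l).take (i+1) = toV 𝒜 p ++ [(x'.2 : V)] := by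
        rw [hvlA, show i + 1 = (toV 𝒜 p).length + 1 from by rw [hvp], take_append_cons]
      have f8 : (toV 𝒜 l).drop (i+1) = toV 𝒜 q ++ (z'.2 : V) :: toV 𝒜 s := by
        rw [hvlA, show i + 1 = (toV 𝒜 p).length + 1 from by rw [hvp], drop_append_cons]
      have f9 : ((toV 𝒜 l).drop (i+1)).take (r-1) = toV 𝒜 q ++ [(z'.2 : V)] := by
        rw [f8, show r - 1 = (toV 𝒜 q).length + 1 from by simp [hvq]; omega, take_append_cons]
      have f10 : ((toV 𝒜 l).drop (i+1)).take (r-2) = toV 𝒜 q := by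
        rw [f8]; exact List.take_left' hvq
      have g1 : l.take i = p := by rw [hlsplit]; exact List.take_left' hplen
      have g2 : l.take (i+1) = p ++ [x'] := by
        rw [hlsplit, show i + 1 = p.length + 1 from by rw [hplen], take_append_cons]
      have hIH := IH (r - 2) hN1 x' z' q hqlen
      simp only [toV_cons, toV_append, toV_nil] at hIH
      simp only [Tterm, Aterm]
      rw [hr, hrk]
      rw [show i + (r-1) + 1 = i + r from by omega]
      rw [show i + r - i = r from by omega]
      rw [show i + (r-1) - i = r - 1 from by omega]
      rw [show i + r - (i+1) = r - 1 from by omega]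
      rw [show i + (r-1) - (i+1) = r - 2 from by omega]
      rw [f1, f3, f4, f5, f6, f7, f9, f10, g1, g2, hIH]
      simp only [hsplice, capp, cprod_cons, cprod_nil, map_sub, map_add, map_smul,
        LinearMap.sub_apply, LinearMap.add_apply, LinearMap.smul_apply,
        smul_sub, smul_add, smul_smul, hcassoc, hcu1, hcu2,
        degsum_append, degsum_cons, degsum_nil, add_zero,
        zpow_add₀ hK0]
    have hsum : (∑ k ∈ Finset.Icc 2 l.length, ∑ i ∈ Finset.range k,
          ((-1 : K) ^ degsum 𝒜 (l.take i)) •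
            cprod circ one
              ((toV 𝒜 l).take i
                ++ m (((toV 𝒜 l).drop i).take (l.length - k + 1))
                  :: (toV 𝒜 l).drop (i + (l.length - k + 1))))
        = Aterm 𝒜 circ one δ l 0 (l.length - 1) + Aterm 𝒜 circ one δ l 1 l.length
          - Aterm 𝒜 circ one δ l 1 (l.length - 1) :=
      keysum l.length hl2 (Tterm 𝒜 circ one m l) (Aterm 𝒜 circ one δ l) hA0 hTn hTk
    have hvl1 : toV 𝒜 l = (x.2 : V) :: (toV 𝒜 mid ++ [(z.2 : V)]) := by
      rw [hl]; simp
    have k1 : (toV 𝒜 l).take (l.length - 1) = (x.2 : V) :: toV 𝒜 mid := by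
      rw [hvl1,
        show ((x.2 : V) :: (toV 𝒜 mid ++ [(z.2 : V)]))
            = ((x.2 : V) :: toV 𝒜 mid) ++ [(z.2 : V)] from by simp]
      exact List.take_left' (by simp; omega)
    have k2 : (toV 𝒜 l).drop (l.length - 1) = [(z.2 : V)] := by
      rw [hvl1,
        show ((x.2 : V) :: (toV 𝒜 mid ++ [(z.2 : V)]))
            = ((x.2 : V) :: toV 𝒜 mid) ++ [(z.2 : V)] from by simp]
      exact List.drop_left' (by simp; omega)
    have k3 : (toV 𝒜 l).take 1 = [(x.2 : V)] := by rw [hvl1]; rfl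
    have k4 : (toV 𝒜 l).drop 1 = toV 𝒜 mid ++ [(z.2 : V)] := by rw [hvl1]; rfl
    have k5 : l.take 1 = [x] := by rw [hl]; rfl
    have hEv0 : Aterm 𝒜 circ one δ l 0 (l.length - 1)
        = circ (δ (cprod circ one (toV 𝒜 (x :: mid)))) (z.2 : V) := by
      simp only [Aterm, Nat.sub_zero, List.take_zero, List.drop_zero]
      rw [k1, k2]
      simp [cprod_cons, cprod_nil, hcu2]
    have hEv1 : Aterm 𝒜 circ one δ l 1 l.length
        = ((-1 : K) ^ x.1) • circ (x.2 : V) (δ (cprod circ one (toV 𝒜 (mid ++ [z])))) := by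
      simp only [Aterm]
      rw [k3, k4, k5,
        show l.length - 1 = (toV 𝒜 mid ++ [(z.2 : V)]).length from by simp; omega,
        List.take_length,
        show (toV 𝒜 l).drop l.length = [] from by
          rw [show l.length = (toV 𝒜 l).length from (toV_length 𝒜 l).symm, List.drop_length]]
      simp [cprod_cons, cprod_nil, hcu2]
    have hEv2 : Aterm 𝒜 circ one δ l 1 (l.length - 1)
        = ((-1 : K) ^ x.1) •
            circ (x.2 : V) (circ (δ (cprod circ one (toV 𝒜 mid))) (z.2 : V)) := by
      simp only [Aterm]
      rw [k3, k4, k5, k2,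
        show l.length - 1 - 1 = (toV 𝒜 mid).length from by simp; omega]
      rw [List.take_left]
      simp [cprod_cons, cprod_nil, hcu2]
    rw [hmrec l hl2, hsum, hEv0, hEv1, hEv2]
    abel
  intro x z mid hmid l hleq
  subst hleq
  exact aux mid.length x z mid rfl
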